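/- For positive reals a, b with a ≠ b, √(L(a,b)·I(a,b)) < ((√a + √b)/2)², i.e. the geometric mean of the logarithmic and identric means is less than the power mean of order 1/2. -/

import Mathlib

open Real Filter Set Topology

noncomputable def fLI (x : ℝ) : ℝ :=
  2 * Real.log ((Real.cosh x + 1) / 2) + Real.log x - Real.log (Real.sinh x)
    - x * Real.cosh x / Real.sinh x + 1

lemma fLI_hasDerivAt {x : ℝ} (hx : 0 < x) :
    HasDerivAt fLI ((Real.sinh x - x) ^ 2 / (x * Real.sinh x ^ 2)) x := by
  have hs : 0 < Real.sinh x := Real.sinh_pos_iff.2 hx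
  have hc : 0 < Real.cosh x := Real.cosh_pos x
  have hc1 : (Real.cosh x + 1) / 2 ≠ 0 := by positivity
  have h1 : HasDerivAt (fun y => 2 * Real.log ((Real.cosh y + 1) / 2))
      (2 * (Real.sinh x / 2 / ((Real.cosh x + 1) / 2))) x := by
    exact (((Real.hasDerivAt_cosh x).add_const 1).div_const 2).log hc1 |>.const_mul 2
  have h2 : HasDerivAt Real.log x⁻¹ x := Real.hasDerivAt_log hx.ne'
  have h3 : HasDerivAt (fun y => Real.log (Real.sinh y)) (Real.cosh x / Real.sinh x) x :=
    (Real.hasDerivAt_sinh x).log hs.ne'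
  have h4 : HasDerivAt (fun y => y * Real.cosh y / Real.sinh y)
      (((1 * Real.cosh x + x * Real.sinh x) * Real.sinh x - x * Real.cosh x * Real.cosh x) /
        Real.sinh x ^ 2) x :=
    ((hasDerivAt_id x).mul (Real.hasDerivAt_cosh x)).div (Real.hasDerivAt_sinh x) hs.ne'
  have := (((h1.add h2).sub h3).sub h4).add_const 1
  refine HasDerivAt.congr_deriv (f := fLI) this ?_
  have hcs := Real.cosh_sq x
  field_simp
  linear_combination (x ^ 2 * Real.cosh x + x ^ 2 - 2 * Real.sinh x * x) * hcs

lemma fLI_tendsto : Tendsto fLI (𝓝[>] (0:ℝ)) (𝓝 0) := by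
  have hslope : Tendsto (fun x : ℝ => Real.sinh x / x) (𝓝[>] (0:ℝ)) (𝓝 1) := by
    have h := (Real.hasDerivAt_sinh 0)
    rw [hasDerivAt_iff_tendsto_slope] at h
    have h' := h.mono_left (nhdsWithin_mono 0 (by intro y hy; exact ne_of_gt hy))
    rw [Real.cosh_zero] at h'
    refine h'.congr' ?_
    filter_upwards [self_mem_nhdsWithin] with y hy
    simp [slope_fun_def, Real.sinh_zero, div_eq_inv_mul]
  have hA : Tendsto (fun x : ℝ => 2 * Real.log ((Real.cosh x + 1) / 2)) (𝓝[>] (0:ℝ)) (𝓝 0) := by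
    have : ContinuousAt (fun x : ℝ => 2 * Real.log ((Real.cosh x + 1) / 2)) 0 := by
      refine (ContinuousAt.log ?_ (by norm_num [Real.cosh_zero])).const_mul 2
      exact (Real.continuous_cosh.continuousAt.add continuousAt_const).div_const 2
    have h0 : (fun x : ℝ => 2 * Real.log ((Real.cosh x + 1) / 2)) 0 = 0 := by
      norm_num [Real.cosh_zero]
    simpa [h0] using this.continuousWithinAt.tendsto
  have hB : Tendsto (fun x : ℝ => Real.log x - Real.log (Real.sinh x)) (𝓝[>] (0:ℝ)) (𝓝 0) := by
    have hlog : Tendsto (fun x : ℝ => -Real.log (Real.sinh x / x)) (𝓝[>] (0:ℝ)) (𝓝 0) := by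
      have := (Real.continuousAt_log (by norm_num : (1:ℝ) ≠ 0)).tendsto.comp hslope
      simpa using this.neg
    refine hlog.congr' ?_
    filter_upwards [self_mem_nhdsWithin] with y hy
    have hy' : (0:ℝ) < y := hy
    have hs : Real.sinh y ≠ 0 := (Real.sinh_pos_iff.2 hy').ne'
    rw [Real.log_div hs hy'.ne']
    ring
  have hC : Tendsto (fun x : ℝ => x * Real.cosh x / Real.sinh x) (𝓝[>] (0:ℝ)) (𝓝 1) := by
    have hcosh : Tendsto (fun x : ℝ => Real.cosh x) (𝓝[>] (0:ℝ)) (𝓝 1) := by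
      have := Real.continuous_cosh.continuousAt (x := 0)
      simpa [Real.cosh_zero] using this.continuousWithinAt.tendsto
    have hdiv : Tendsto (fun x : ℝ => Real.cosh x / (Real.sinh x / x)) (𝓝[>] (0:ℝ)) (𝓝 1) := by
      have h := hcosh.div hslope one_ne_zero
      rw [div_one] at h
      exact h
    refine hdiv.congr fun y => ?_
    rw [div_div_eq_mul_div]
    ring
  have h := ((hA.add hB).sub hC).add_const 1
  norm_num at h
  refine h.congr fun y => ?_
  simp only [fLI]
  ring

lemma fLI_pos {x : ℝ} (hx : 0 < x) : 0 < fLI x := by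
  have hmono : StrictMonoOn fLI (Ioi 0) := by
    refine strictMonoOn_of_deriv_pos (convex_Ioi 0) ?_ ?_
    · exact fun y hy => (fLI_hasDerivAt hy).continuousAt.continuousWithinAt
    · intro y hy
      rw [interior_Ioi] at hy
      rw [(fLI_hasDerivAt hy).deriv]
      have h1 : y < Real.sinh y := Real.self_lt_sinh_iff.2 hy
      have h2 : 0 < Real.sinh y := Real.sinh_pos_iff.2 hy
      have hy' : (0:ℝ) < y := hy
      apply div_pos (pow_pos (by linarith) 2) (by positivity)
  have h2 : 0 ≤ fLI (x / 2) := by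
    refine le_of_tendsto fLI_tendsto ?_
    filter_upwards [Ioo_mem_nhdsGT_of_mem (by constructor <;> linarith : (0:ℝ) ∈ Ico 0 (x/2))]
      with y hy
    exact (hmono (mem_Ioi.2 hy.1) (mem_Ioi.2 (by linarith [hy.1, hy.2])) hy.2).le
  calc (0:ℝ) ≤ fLI (x / 2) := h2
    _ < fLI x := hmono (mem_Ioi.2 (by linarith)) (mem_Ioi.2 hx) (by linarith)

lemma core_pos {x : ℝ} (hx : 0 < x) :
    Real.sinh x / x * Real.exp (x * Real.cosh x / Real.sinh x - 1) <
      ((Real.cosh x + 1) / 2) ^ 2 := by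
  have hs : 0 < Real.sinh x := Real.sinh_pos_iff.2 hx
  have hsx : 0 < Real.sinh x / x := div_pos hs hx
  have hc1 : 0 < (Real.cosh x + 1) / 2 := by have := Real.cosh_pos x; linarith
  have hf := fLI_pos hx
  unfold fLI at hf
  have key : Real.log (Real.sinh x / x) + (x * Real.cosh x / Real.sinh x - 1) <
      2 * Real.log ((Real.cosh x + 1) / 2) := by
    rw [Real.log_div hs.ne' hx.ne']
    linarith
  calc Real.sinh x / x * Real.exp (x * Real.cosh x / Real.sinh x - 1)
      = Real.exp (Real.log (Real.sinh x / x) + (x * Real.cosh x / Real.sinh x - 1)) := by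
        rw [Real.exp_add, Real.exp_log hsx]
    _ < Real.exp (2 * Real.log ((Real.cosh x + 1) / 2)) := Real.exp_lt_exp.2 key
    _ = ((Real.cosh x + 1) / 2) ^ 2 := by
        rw [two_mul, Real.exp_add, Real.exp_log hc1]; ring

lemma core {x : ℝ} (hx : x ≠ 0) :
    Real.sinh x / x * Real.exp (x * Real.cosh x / Real.sinh x - 1) <
      ((Real.cosh x + 1) / 2) ^ 2 := by
  rcases hx.lt_or_gt with h | h
  · have := core_pos (x := -x) (by linarith)
    rw [Real.sinh_neg, Real.cosh_neg] at this
    rw [neg_div_neg_eq] at this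
    convert this using 4
    rw [neg_mul, neg_div, div_neg, neg_neg]
  · exact core_pos h

theorem sqrt_LI_lt_powerMean_half (a b : ℝ) (ha : 0 < a) (hb : 0 < b) (hab : a ≠ b) :
    Real.sqrt (((b - a) / (Real.log b - Real.log a)) *
        ((1 / Real.exp 1) * (b ^ b / a ^ a) ^ (1 / (b - a)))) <
      ((Real.sqrt a + Real.sqrt b) / 2) ^ 2 := by
  set m : ℝ := (Real.log a + Real.log b) / 2 with hm
  set x : ℝ := (Real.log b - Real.log a) / 2 with hxdef
  have hlab : Real.log a ≠ Real.log b := fun h =>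
    hab (by rw [← Real.exp_log ha, ← Real.exp_log hb, h])
  have hx : x ≠ 0 := by
    rw [hxdef]; intro h; apply hlab; linarith [(sub_eq_zero.1 (by linarith : Real.log b - Real.log a = 0))]
  have hs : Real.sinh x ≠ 0 := fun h => hx (Real.sinh_eq_zero.1 h)
  have hex : Real.exp x ≠ 0 := Real.exp_ne_zero x
  have hA : a = Real.exp (m - x) := by
    rw [← Real.exp_log ha]; congr 1; rw [hm, hxdef]; ring
  have hB : b = Real.exp (m + x) := by
    rw [← Real.exp_log hb]; congr 1; rw [hm, hxdef]; ring
  have hba : b - a = Real.exp m * (2 * Real.sinh x) := by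
    rw [hA, hB, Real.sinh_eq, Real.exp_sub, Real.exp_add, Real.exp_neg]
    field_simp
  have hba' : b - a ≠ 0 := by
    rw [hba]
    exact mul_ne_zero (Real.exp_ne_zero m) (by simpa using hs)
  have hL : (b - a) / (Real.log b - Real.log a) = Real.exp m * (Real.sinh x / x) := by
    have hlog : Real.log b - Real.log a = 2 * x := by rw [hxdef]; ring
    rw [hba, hlog]
    field_simp
  have hI : (1 / Real.exp 1) * (b ^ b / a ^ a) ^ (1 / (b - a)) =
      Real.exp m * Real.exp (x * Real.cosh x / Real.sinh x - 1) := by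
    have hbb : b ^ b = Real.exp (Real.log b * b) := Real.rpow_def_of_pos hb b
    have haa : a ^ a = Real.exp (Real.log a * a) := Real.rpow_def_of_pos ha a
    have hq : b ^ b / a ^ a = Real.exp (Real.log b * b - Real.log a * a) := by
      rw [hbb, haa, Real.exp_sub]
    have la : Real.log a = m - x := by rw [hm, hxdef]; ring
    have lb : Real.log b = m + x := by rw [hm, hxdef]; ring
    have hnum : Real.log b * b - Real.log a * a =
        Real.exp m * (2 * m * Real.sinh x + 2 * x * Real.cosh x) := by
      rw [la, lb, hA, hB, Real.sinh_eq, Real.cosh_eq, Real.exp_sub, Real.exp_add, Real.exp_neg]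
      field_simp
      ring
    have hrpow : Real.exp (Real.log b * b - Real.log a * a) ^ (1 / (b - a)) =
        Real.exp ((Real.log b * b - Real.log a * a) * (1 / (b - a))) := by
      rw [Real.rpow_def_of_pos (Real.exp_pos _), Real.log_exp]
    have harg : (Real.log b * b - Real.log a * a) * (1 / (b - a)) =
        m + x * Real.cosh x / Real.sinh x := by
      rw [hnum, hba]
      field_simp
    rw [hq, hrpow, harg]
    rw [show m + x * Real.cosh x / Real.sinh x =
      m + (x * Real.cosh x / Real.sinh x - 1) + 1 by ring]
    rw [Real.exp_add, Real.exp_add]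
    field_simp
  have hM : ((Real.sqrt a + Real.sqrt b) / 2) ^ 2 = Real.exp m * ((Real.cosh x + 1) / 2) := by
    have hsab : Real.sqrt a * Real.sqrt b = Real.exp m := by
      rw [← Real.sqrt_mul ha.le]
      rw [show a * b = Real.exp m * Real.exp m by
        rw [hA, hB, ← Real.exp_add, ← Real.exp_add]; congr 1; ring]
      exact Real.sqrt_mul_self (Real.exp_pos m).le
    have hab2 : a + b = Real.exp m * (2 * Real.cosh x) := by
      rw [hA, hB, Real.cosh_eq, Real.exp_sub, Real.exp_add, Real.exp_neg]
      field_simp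
      ring
    have h2 : ((Real.sqrt a + Real.sqrt b) / 2) ^ 2 =
        (a + b + 2 * (Real.sqrt a * Real.sqrt b)) / 4 := by
      rw [div_pow]
      rw [add_sq, Real.sq_sqrt ha.le, Real.sq_sqrt hb.le]
      ring
    rw [h2, hab2, hsab]
    ring
  rw [hL, hI, hM]
  have hMpos : 0 < Real.exp m * ((Real.cosh x + 1) / 2) := by
    have := Real.cosh_pos x
    positivity
  rw [Real.sqrt_lt' hMpos]
  have hcore := core hx
  calc Real.exp m * (Real.sinh x / x) *
        (Real.exp m * Real.exp (x * Real.cosh x / Real.sinh x - 1))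
      = Real.exp m ^ 2 * (Real.sinh x / x * Real.exp (x * Real.cosh x / Real.sinh x - 1)) := by
        ring
    _ < Real.exp m ^ 2 * ((Real.cosh x + 1) / 2) ^ 2 := by
        apply mul_lt_mul_of_pos_left hcore
        positivity
    _ = (Real.exp m * ((Real.cosh x + 1) / 2)) ^ 2 := by ring
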